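/- At t = 4, the left-hand derivative of h, lim_{ε→0⁺} (h(4) − h(4−ε))/ε, equals (1 − 4 log 2)/32, while the right-hand difference quotient (h(4+ε) − h(4))/ε tends to −∞ as ε → 0⁺. In particular h is not differentiable at t = 4. -/

import Mathlib

/-- The inverse hyperbolic tangent. -/
noncomputable def artanh (x : ℝ) : ℝ := (1 / 2) * Real.log ((1 + x) / (1 - x))

/-- The Hall distribution pdf. -/
noncomputable def hallPdf (t : ℝ) : ℝ :=
  if t < 1 then 0
  else if t < 4 then 2 * Real.log t / t ^ 2
  else 2 * Real.log t / t ^ 2 - 4 / t ^ 2 * artanh (Real.sqrt (1 - 4 / t))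

open Filter Set

lemma artanh_zero : artanh 0 = 0 := by simp [artanh]

lemma hallPdf_four : hallPdf 4 = 2 * Real.log 4 / 4 ^ 2 := by
  have h : (1 : ℝ) - 4 / 4 = 0 := by norm_num
  rw [hallPdf, if_neg (by norm_num), if_neg (by norm_num), h]
  simp [artanh_zero]

lemma hallPdf_mid {t : ℝ} (h1 : 1 ≤ t) (h4 : t < 4) : hallPdf t = 2 * Real.log t / t ^ 2 := by
  rw [hallPdf, if_neg (by linarith), if_pos h4]

lemma hallPdf_hi {t : ℝ} (h4 : 4 ≤ t) :
    hallPdf t = 2 * Real.log t / t ^ 2 - 4 / t ^ 2 * artanh (Real.sqrt (1 - 4 / t)) := by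
  rw [hallPdf, if_neg (by linarith), if_neg (by linarith)]

lemma g_deriv : HasDerivAt (fun t : ℝ => 2 * Real.log t / t ^ 2)
    ((1 - 4 * Real.log 2) / 32) 4 := by
  have h1 : HasDerivAt Real.log (1/4) 4 := by
    simpa using Real.hasDerivAt_log (by norm_num : (4:ℝ) ≠ 0)
  have h2 := h1.const_mul 2
  have h3 : HasDerivAt (fun t : ℝ => t ^ 2) ((2:ℕ) * 4 ^ 1) 4 := hasDerivAt_pow 2 (4:ℝ)
  have h4 := h2.div h3 (by norm_num)
  refine HasDerivAt.congr_deriv h4 ?_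
  have hl : Real.log 4 = 2 * Real.log 2 := by
    rw [show (4:ℝ) = 2^2 by norm_num, Real.log_pow]; push_cast; ring
  rw [hl]; push_cast; ring

lemma half_le_artanh {x : ℝ} (h0 : 0 ≤ x) (h1 : x < 1) : x / 2 ≤ artanh x := by
  have hpos : (0:ℝ) < 1 - x := by linarith
  have hlog : Real.log (1 - x) ≤ -x := by
    have := Real.log_le_sub_one_of_pos hpos
    linarith
  have hmono : Real.log (1 / (1 - x)) ≤ Real.log ((1 + x) / (1 - x)) := by
    apply Real.log_le_log (by positivity)
    gcongr
    linarith
  have h1x : Real.log (1 / (1 - x)) = - Real.log (1 - x) := by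
    rw [one_div, Real.log_inv]
  rw [artanh]
  nlinarith [hmono, hlog, h1x]

lemma hall_map_sub : Tendsto (fun ε : ℝ => 4 - ε) (nhdsWithin 0 (Ioi 0))
    (nhdsWithin 4 {(4:ℝ)}ᶜ) := by
  rw [tendsto_nhdsWithin_iff]
  constructor
  · have h : Tendsto (fun ε : ℝ => 4 - ε) (nhds 0) (nhds 4) := by
      simpa using (tendsto_const_nhds.sub tendsto_id : Tendsto (fun ε : ℝ => 4 - ε) (nhds 0) (nhds (4 - 0)))
    exact h.mono_left nhdsWithin_le_nhds
  · filter_upwards [self_mem_nhdsWithin] with ε hε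
    have : (0:ℝ) < ε := hε
    simp only [mem_compl_iff, mem_singleton_iff]
    intro h
    linarith [sub_eq_self.mp h]

lemma hall_map_add : Tendsto (fun ε : ℝ => 4 + ε) (nhdsWithin 0 (Ioi 0))
    (nhdsWithin 4 {(4:ℝ)}ᶜ) := by
  rw [tendsto_nhdsWithin_iff]
  constructor
  · have h : Tendsto (fun ε : ℝ => 4 + ε) (nhds 0) (nhds 4) := by
      simpa using (tendsto_const_nhds.add tendsto_id : Tendsto (fun ε : ℝ => 4 + ε) (nhds 0) (nhds (4 + 0)))
    exact h.mono_left nhdsWithin_le_nhds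
  · filter_upwards [self_mem_nhdsWithin] with ε hε
    have : (0:ℝ) < ε := hε
    simp only [mem_compl_iff, mem_singleton_iff]
    intro h
    have : ε = 0 := by linarith [add_eq_left.mp h]
    linarith

/-- The right difference quotients tend to `-∞`. -/
lemma right_tendsto :
    Tendsto (fun ε : ℝ => (hallPdf (4 + ε) - hallPdf 4) / ε) (nhdsWithin 0 (Ioi 0))
      atBot := by
  have hslope := hasDerivAt_iff_tendsto_slope.mp g_deriv
  have hS : Tendsto (fun ε : ℝ => slope (fun t : ℝ => 2 * Real.log t / t ^ 2) 4 (4 + ε))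
      (nhdsWithin 0 (Ioi 0)) (nhds ((1 - 4 * Real.log 2) / 32)) := hslope.comp hall_map_add
  -- the singular part tends to atTop
  set B : ℝ → ℝ := fun ε => 4 / (4 + ε) ^ 2 * artanh (Real.sqrt (1 - 4 / (4 + ε))) / ε with hB
  have hsqrt : Tendsto Real.sqrt (nhdsWithin 0 (Ioi 0)) (nhdsWithin 0 (Ioi 0)) := by
    rw [tendsto_nhdsWithin_iff]
    constructor
    · have := (Real.continuous_sqrt.tendsto 0)
      simpa using this.mono_left nhdsWithin_le_nhds
    · filter_upwards [self_mem_nhdsWithin] with ε hε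
      exact Real.sqrt_pos.mpr hε
  have hinv : Tendsto (fun ε : ℝ => (Real.sqrt ε)⁻¹) (nhdsWithin 0 (Ioi 0)) atTop :=
    tendsto_inv_nhdsGT_zero.comp hsqrt
  have hc : (0:ℝ) < 2 / (25 * Real.sqrt 5) := by positivity
  have hbase : Tendsto (fun ε : ℝ => 2 / (25 * Real.sqrt 5) * (Real.sqrt ε)⁻¹)
      (nhdsWithin 0 (Ioi 0)) atTop := hinv.const_mul_atTop hc
  have hBtop : Tendsto B (nhdsWithin 0 (Ioi 0)) atTop := by
    apply tendsto_atTop_mono' _ _ hbase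
    filter_upwards [Ioo_mem_nhdsGT_of_mem (by norm_num : (0:ℝ) ∈ Ico 0 1)] with ε hε
    obtain ⟨hε0, hε1⟩ := hε
    have h4e : (0:ℝ) < 4 + ε := by linarith
    have hfrac : (1:ℝ) - 4 / (4 + ε) = ε / (4 + ε) := by field_simp; ring
    have hx0 : 0 ≤ Real.sqrt (ε / (4 + ε)) := Real.sqrt_nonneg _
    have hxlt : Real.sqrt (ε / (4 + ε)) < 1 := by
      rw [show (1:ℝ) = Real.sqrt 1 by simp]
      apply Real.sqrt_lt_sqrt (by positivity)
      rw [div_lt_one h4e]; linarith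
    have hart := half_le_artanh hx0 hxlt
    have hle : ε / 5 ≤ ε / (4 + ε) :=
      div_le_div_of_nonneg_left hε0.le h4e (by linarith)
    have hxge : Real.sqrt (ε / 5) ≤ Real.sqrt (ε / (4 + ε)) := Real.sqrt_le_sqrt hle
    have hsq5 : Real.sqrt (ε / 5) = Real.sqrt ε / Real.sqrt 5 :=
      Real.sqrt_div hε0.le 5
    have hart2 : Real.sqrt ε / (2 * Real.sqrt 5) ≤ artanh (Real.sqrt (ε / (4 + ε))) := by
      have : Real.sqrt ε / (2 * Real.sqrt 5) = Real.sqrt (ε / 5) / 2 := by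
        rw [hsq5]; ring
      rw [this]
      calc Real.sqrt (ε / 5) / 2 ≤ Real.sqrt (ε / (4 + ε)) / 2 := by linarith
        _ ≤ _ := hart
    have hcoef : (4:ℝ) / 25 ≤ 4 / (4 + ε) ^ 2 := by
      rw [div_le_div_iff₀ (by norm_num) (by positivity)]
      nlinarith
    have hnum : 4 / 25 * (Real.sqrt ε / (2 * Real.sqrt 5)) ≤
        4 / (4 + ε) ^ 2 * artanh (Real.sqrt (1 - 4 / (4 + ε))) := by
      rw [hfrac]
      have h1 : (0:ℝ) ≤ Real.sqrt ε / (2 * Real.sqrt 5) := by positivity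
      have h2 : (0:ℝ) ≤ 4 / (4 + ε) ^ 2 := by positivity
      calc 4 / 25 * (Real.sqrt ε / (2 * Real.sqrt 5))
          ≤ 4 / (4 + ε) ^ 2 * (Real.sqrt ε / (2 * Real.sqrt 5)) := by
            exact mul_le_mul_of_nonneg_right hcoef h1
        _ ≤ 4 / (4 + ε) ^ 2 * artanh (Real.sqrt (ε / (4 + ε))) :=
            mul_le_mul_of_nonneg_left hart2 h2
    have hsve : Real.sqrt ε / ε = (Real.sqrt ε)⁻¹ := by
      rw [Real.sqrt_div_self', one_div]
    have : 2 / (25 * Real.sqrt 5) * (Real.sqrt ε)⁻¹ =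
        4 / 25 * (Real.sqrt ε / (2 * Real.sqrt 5)) / ε := by
      rw [← hsve]; field_simp; ring
    rw [this, hB]
    exact (div_le_div_iff_of_pos_right hε0).mpr hnum
  -- combine
  have hsum : Tendsto (fun ε : ℝ =>
      slope (fun t : ℝ => 2 * Real.log t / t ^ 2) 4 (4 + ε) + -(B ε))
      (nhdsWithin 0 (Ioi 0)) atBot :=
    hS.add_atBot (tendsto_neg_atTop_atBot.comp hBtop)
  apply hsum.congr'
  filter_upwards [Ioo_mem_nhdsGT_of_mem (by norm_num : (0:ℝ) ∈ Ico 0 1)] with ε hε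
  obtain ⟨hε0, hε1⟩ := hε
  rw [hallPdf_hi (by linarith), hallPdf_four, slope_def_field, hB]
  have hne : ε ≠ 0 := ne_of_gt hε0
  field_simp
  ring_nf
  field_simp
  ring

set_option maxHeartbeats 800000 in
open Filter Set in
/-- The left-hand derivative of the Hall pdf at `4` is `(1 - 4 log 2)/32`, its right-hand
difference quotients at `4` tend to `-∞`, and it is not differentiable at `4`. -/
theorem hall_one_sided_derivs_at_four :
    Tendsto (fun ε : ℝ => (hallPdf 4 - hallPdf (4 - ε)) / ε) (nhdsWithin 0 (Ioi 0))
      (nhds ((1 - 4 * Real.log 2) / 32)) ∧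
    Tendsto (fun ε : ℝ => (hallPdf (4 + ε) - hallPdf 4) / ε) (nhdsWithin 0 (Ioi 0))
      atBot ∧
    ¬ DifferentiableAt ℝ hallPdf 4 := by
  have hslope := hasDerivAt_iff_tendsto_slope.mp g_deriv
  refine ⟨?_, right_tendsto, ?_⟩
  · have hL := hslope.comp hall_map_sub
    apply hL.congr'
    filter_upwards [Ioo_mem_nhdsGT_of_mem (by norm_num : (0:ℝ) ∈ Ico 0 3)] with ε hε
    obtain ⟨hε0, hε3⟩ := hε
    have h1 : (1:ℝ) ≤ 4 - ε := by linarith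
    have h4 : (4:ℝ) - ε < 4 := by linarith
    simp only [Function.comp]
    rw [slope_def_field, hallPdf_mid h1 h4, hallPdf_four]
    rw [show (4:ℝ) - ε - 4 = -ε by ring, div_neg, ← neg_div, neg_sub]
  · intro hdiff
    have hd := hdiff.hasDerivAt
    have hs := hasDerivAt_iff_tendsto_slope.mp hd
    have hcomp := hs.comp hall_map_add
    have heq : (fun ε : ℝ => slope hallPdf 4 (4 + ε)) =
        fun ε : ℝ => (hallPdf (4 + ε) - hallPdf 4) / ε := by
      funext ε
      rw [slope_def_field, show (4:ℝ) + ε - 4 = ε by ring]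
    rw [show ((slope hallPdf 4) ∘ fun ε : ℝ => 4 + ε) =
        fun ε : ℝ => slope hallPdf 4 (4 + ε) from rfl, heq] at hcomp
    exact not_tendsto_atBot_of_tendsto_nhds hcomp right_tendsto
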